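/- Let 0 < δ < λ < 1 and let k ≥ 1 be an integer. Let B₁ := diag(λ, δ) and let B₂ := λ·R_{π/(2k)}, where R_θ denotes the 2×2 rotation matrix through angle θ. Then B₁ⁿ B₂ᵏ B₁ⁿ = λ^{n+k} δⁿ · R_{π/2} for every n ≥ 1, and consequently the lower spectral radius satisfies ϱ̲(B₁, B₂) ≤ √(λδ). -/

import Mathlib

open MeasureTheory Filter Topology

noncomputable section

/-- The operator norm of a `d × d` real matrix induced by the Euclidean norm on `ℝ^d`. -/
noncomputable def opNorm {d : ℕ} (A : Matrix (Fin d) (Fin d) ℝ) : ℝ :=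
  ‖Matrix.toEuclideanCLM (𝕜 := ℝ) (n := Fin d) A‖

/-- The singular values of a `d × d` real matrix, in decreasing order:
`singularValues A j` is `σ_{j+1}(A)`, the `(j+1)`-st largest singular value. -/
noncomputable def singularValues {d : ℕ} (A : Matrix (Fin d) (Fin d) ℝ) : Fin d → ℝ :=
  fun j =>
    (fun i => Real.sqrt ((Matrix.isHermitian_conjTranspose_mul_self A).eigenvalues i))
      (Tuple.sort (fun i => Real.sqrt ((Matrix.isHermitian_conjTranspose_mul_self A).eigenvalues i))
        (Fin.rev j))

/-- The singular value function `φ^s(A)`. -/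
noncomputable def svf {d : ℕ} (s : ℝ) (A : Matrix (Fin d) (Fin d) ℝ) : ℝ :=
  if (d : ℝ) ≤ s then |A.det| ^ (s / d)
  else ∏ i : Fin d,
    if (i : ℕ) < ⌊s⌋₊ then singularValues A i
    else if (i : ℕ) = ⌊s⌋₊ then singularValues A i ^ (s - (⌊s⌋₊ : ℝ))
    else 1

/-- The product `A_{w 0} ⋯ A_{w (n-1)}` of matrices along the word `w`. -/
noncomputable def wordProd {d n : ℕ} (A : Fin 2 → Matrix (Fin d) (Fin d) ℝ)
    (w : Fin n → Fin 2) : Matrix (Fin d) (Fin d) ℝ :=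
  (List.ofFn fun j => A (w j)).prod

/-- The probability vector `(p, 1-p)`. -/
noncomputable def pvec (p : ℝ) : Fin 2 → ℝ := ![p, 1 - p]

/-- `Σ_{i₁,…,i_n ∈ {1,2}} φ^s(A_{i₁}⋯A_{i_n})^{1−q} p_{i₁}^q ⋯ p_{i_n}^q`. -/
noncomputable def Zsum (A : Fin 2 → Matrix (Fin 2) (Fin 2) ℝ) (p q s : ℝ) (n : ℕ) : ℝ :=
  ∑ w : Fin n → Fin 2,
    svf s (wordProd A w) ^ (1 - q) * ∏ j : Fin n, pvec p (w j) ^ q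

/-- `𝔯_q(A₁, A₂, p)`. -/
noncomputable def rqDim (A : Fin 2 → Matrix (Fin 2) (Fin 2) ℝ) (p q : ℝ) : ℝ :=
  sSup {s : ℝ | 0 < s ∧ Summable (fun n : ℕ => Zsum A p q s (n + 1))}

/-- `R_q(A₁, A₂, p, s)`. -/
noncomputable def Rq (A : Fin 2 → Matrix (Fin 2) (Fin 2) ℝ) (p q s : ℝ) : ℝ :=
  limUnder atTop (fun n : ℕ => (1 / (n : ℝ)) * Real.log (Zsum A p q s n))

/-- The minimum over all words of length `n` of the norm of the corresponding product. -/
noncomputable def minNormProd (A : Fin 2 → Matrix (Fin 2) (Fin 2) ℝ) (n : ℕ) : ℝ :=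
  ⨅ w : Fin n → Fin 2, opNorm (wordProd A w)

/-- The lower spectral radius `ϱ̲(A₁, A₂)`. -/
noncomputable def lsr (A : Fin 2 → Matrix (Fin 2) (Fin 2) ℝ) : ℝ :=
  limUnder atTop (fun n : ℕ => minNormProd A n ^ (1 / (n : ℝ)))

/-- Pairs of invertible `2 × 2` matrices of operator norm less than one. -/
def validPair : Set (Matrix (Fin 2) (Fin 2) ℝ × Matrix (Fin 2) (Fin 2) ℝ) :=
  {B | IsUnit B.1 ∧ IsUnit B.2 ∧ opNorm B.1 < 1 ∧ opNorm B.2 < 1}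

/-- Rotation of `ℝ²` about the origin through angle `θ`. -/
noncomputable def rot (θ : ℝ) : Matrix (Fin 2) (Fin 2) ℝ :=
  !![Real.cos θ, -Real.sin θ; Real.sin θ, Real.cos θ]

/-- `(A₁, A₂)` is `(c, ε, λ)`-resistant. -/
def ResistantWith (c ε lam : ℝ) (A : Fin 2 → Matrix (Fin 2) (Fin 2) ℝ) : Prop :=
  ∀ n : ℕ, 1 ≤ n → ∀ w : Fin n → Fin 2,
    ((Finset.univ.filter fun j => w j = 1).card : ℝ) ≤ ε * n →
    c * lam ^ n ≤ opNorm (wordProd A w)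

/-- `(A₁, A₂)` is resistant. -/
def Resistant (A : Fin 2 → Matrix (Fin 2) (Fin 2) ℝ) : Prop :=
  ∃ c > (0:ℝ), ∃ ε > (0:ℝ), ∃ lam > (1:ℝ), ResistantWith c ε lam A

/-- `ℋ`: `2 × 2` real matrices of determinant one with two unequal real eigenvalues. -/
def Hset : Set (Matrix (Fin 2) (Fin 2) ℝ) :=
  {H | H.det = 1 ∧ ∃ a b : ℝ, a ≠ b ∧ H.charpoly.IsRoot a ∧ H.charpoly.IsRoot b}

/-- `ℰ`: `2 × 2` real matrices of determinant one with non-real eigenvalues. -/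
def Eset : Set (Matrix (Fin 2) (Fin 2) ℝ) :=
  {R | R.det = 1 ∧ ∀ x : ℝ, ¬ R.charpoly.IsRoot x}


/-- Abbreviation for the space of `2 × 2` real matrices. -/
abbrev Mat2 := Matrix (Fin 2) (Fin 2) ℝ

set_option synthInstance.maxHeartbeats 1000000 in
set_option maxHeartbeats 2000000 in
lemma myOpNorm_nonneg {d : ℕ} (A : Matrix (Fin d) (Fin d) ℝ) : 0 ≤ opNorm A := norm_nonneg _

set_option synthInstance.maxHeartbeats 1000000 in
set_option maxHeartbeats 2000000 in
lemma myOpNorm_mul_le {d : ℕ} (A B : Matrix (Fin d) (Fin d) ℝ) :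
    opNorm (A * B) ≤ opNorm A * opNorm B := by
  unfold opNorm; rw [map_mul]; exact norm_mul_le _ _

set_option synthInstance.maxHeartbeats 1000000 in
set_option maxHeartbeats 2000000 in
lemma myOpNorm_smul_le {d : ℕ} (c : ℝ) (A : Matrix (Fin d) (Fin d) ℝ) :
    opNorm (c • A) ≤ |c| * opNorm A := by
  unfold opNorm; rw [_root_.map_smul, ← Real.norm_eq_abs]
  exact ContinuousLinearMap.opNorm_smul_le c _

set_option synthInstance.maxHeartbeats 1000000 in
set_option maxHeartbeats 2000000 in
lemma col_le_opNorm (A : Matrix (Fin 2) (Fin 2) ℝ) (i : Fin 2) :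
    Real.sqrt (A 0 i ^ 2 + A 1 i ^ 2) ≤ opNorm A := by
  have h := (Matrix.toEuclideanCLM (𝕜 := ℝ) (n := Fin 2) A).le_opNorm
    ((WithLp.equiv 2 (Fin 2 → ℝ)).symm (Pi.single i 1))
  rw [show ∀ x : Fin 2 → ℝ, Matrix.toEuclideanCLM (𝕜 := ℝ) (n := Fin 2) A ((WithLp.equiv 2 (Fin 2 → ℝ)).symm x) = (WithLp.equiv 2 (Fin 2 → ℝ)).symm (Matrix.toLin' A x) from fun x => rfl] at h
  have hnx : ‖(WithLp.equiv 2 (Fin 2 → ℝ)).symm (Pi.single i 1)‖ = 1 := by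
    rw [EuclideanSpace.norm_eq]
    fin_cases i <;> simp [Fin.sum_univ_two, Pi.single_apply]
  have hny : ‖(WithLp.equiv 2 (Fin 2 → ℝ)).symm (Matrix.toLin' A (Pi.single i 1))‖
      = Real.sqrt (A 0 i ^ 2 + A 1 i ^ 2) := by
    rw [EuclideanSpace.norm_eq]
    simp [Fin.sum_univ_two, Matrix.toLin'_apply, Matrix.mulVec_single, sq_abs, sq]
  rw [hnx, hny, mul_one] at h
  exact h

lemma det_le_opNorm_sq (A : Matrix (Fin 2) (Fin 2) ℝ) : |A.det| ≤ opNorm A ^ 2 := by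
  have h0 := col_le_opNorm A 0
  have h1 := col_le_opNorm A 1
  have hs0 : (0:ℝ) ≤ Real.sqrt (A 0 0 ^ 2 + A 1 0 ^ 2) := Real.sqrt_nonneg _
  have hdet : |A.det| ≤ Real.sqrt (A 0 0 ^ 2 + A 1 0 ^ 2) * Real.sqrt (A 0 1 ^ 2 + A 1 1 ^ 2) := by
    rw [Matrix.det_fin_two, ← Real.sqrt_mul (by positivity), ← Real.sqrt_sq_eq_abs]
    apply Real.sqrt_le_sqrt
    nlinarith [sq_nonneg (A 0 0 * A 0 1 + A 1 0 * A 1 1)]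
  calc |A.det| ≤ _ := hdet
    _ ≤ opNorm A * opNorm A := mul_le_mul h0 h1 (Real.sqrt_nonneg _) (le_trans hs0 h0)
    _ = opNorm A ^ 2 := (sq (opNorm A)).symm

lemma sqrt_det_le_opNorm (A : Matrix (Fin 2) (Fin 2) ℝ) :
    Real.sqrt |A.det| ≤ opNorm A := by
  have := Real.sqrt_le_sqrt (det_le_opNorm_sq A)
  rwa [Real.sqrt_sq (myOpNorm_nonneg A)] at this

lemma wordProd_append {d m n : ℕ} (A : Fin 2 → Matrix (Fin d) (Fin d) ℝ)
    (w1 : Fin m → Fin 2) (w2 : Fin n → Fin 2) :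
    wordProd A (Fin.append w1 w2) = wordProd A w1 * wordProd A w2 := by
  unfold wordProd
  rw [List.ofFn_add, List.prod_append]
  simp [Fin.append_left, Fin.append_right]

lemma wordProd_const {d n : ℕ} (A : Fin 2 → Matrix (Fin d) (Fin d) ℝ) (c : Fin 2) :
    wordProd A (fun _ : Fin n => c) = A c ^ n := by
  unfold wordProd
  rw [List.ofFn_const, List.prod_replicate]

lemma det_wordProd {d n : ℕ} (A : Fin 2 → Matrix (Fin d) (Fin d) ℝ) (w : Fin n → Fin 2) :
    (wordProd A w).det = ∏ j : Fin n, (A (w j)).det := by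
  unfold wordProd
  rw [← Matrix.coe_detMonoidHom, map_list_prod]
  rw [List.map_ofFn, List.prod_ofFn]
  rfl

lemma bdd_range (A : Fin 2 → Matrix (Fin 2) (Fin 2) ℝ) (n : ℕ) :
    BddBelow (Set.range fun w : Fin n → Fin 2 => opNorm (wordProd A w)) :=
  ⟨0, by rintro x ⟨w, rfl⟩; exact myOpNorm_nonneg _⟩

lemma minNormProd_le (A : Fin 2 → Matrix (Fin 2) (Fin 2) ℝ) (n : ℕ) (w : Fin n → Fin 2) :
    minNormProd A n ≤ opNorm (wordProd A w) := ciInf_le (bdd_range A n) w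

lemma minNormProd_ge (A : Fin 2 → Matrix (Fin 2) (Fin 2) ℝ) (n : ℕ) (c : ℝ)
    (h : ∀ w : Fin n → Fin 2, c ≤ opNorm (wordProd A w)) :
    c ≤ minNormProd A n := le_ciInf h

lemma minNormProd_submul (A : Fin 2 → Matrix (Fin 2) (Fin 2) ℝ) (m n : ℕ) :
    minNormProd A (m + n) ≤ minNormProd A m * minNormProd A n := by
  obtain ⟨w1, hw1⟩ := Finite.exists_min fun w : Fin m → Fin 2 => opNorm (wordProd A w)
  obtain ⟨w2, hw2⟩ := Finite.exists_min fun w : Fin n → Fin 2 => opNorm (wordProd A w)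
  have e1 : minNormProd A m = opNorm (wordProd A w1) :=
    le_antisymm (minNormProd_le A m w1) (minNormProd_ge A m _ hw1)
  have e2 : minNormProd A n = opNorm (wordProd A w2) :=
    le_antisymm (minNormProd_le A n w2) (minNormProd_ge A n _ hw2)
  calc minNormProd A (m + n) ≤ opNorm (wordProd A (Fin.append w1 w2)) :=
        minNormProd_le A _ _
    _ ≤ opNorm (wordProd A w1) * opNorm (wordProd A w2) := by
        rw [wordProd_append]; exact myOpNorm_mul_le _ _
    _ = minNormProd A m * minNormProd A n := by rw [e1, e2]

lemma sqrt_pow'' {a : ℝ} (ha : 0 ≤ a) (n : ℕ) :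
    Real.sqrt (a ^ n) = Real.sqrt a ^ n := by
  induction n with
  | zero => simp
  | succ n ih => rw [pow_succ, pow_succ, Real.sqrt_mul (pow_nonneg ha n), ih]

lemma lower_bound (A : Fin 2 → Matrix (Fin 2) (Fin 2) ℝ) {lam del : ℝ}
    (hdel : 0 < del) (hdl : del < lam)
    (hA : ∀ i, lam * del ≤ (A i).det) (n : ℕ) (w : Fin n → Fin 2) :
    Real.sqrt (lam * del) ^ n ≤ opNorm (wordProd A w) := by
  have hld : (0:ℝ) < lam * del := mul_pos (hdel.trans hdl) hdel
  have hdet : (lam * del) ^ n ≤ (wordProd A w).det := by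
    rw [det_wordProd]
    calc (lam * del) ^ n = ∏ _j : Fin n, (lam * del) := by
          rw [Finset.prod_const, Finset.card_univ, Fintype.card_fin]
      _ ≤ ∏ j : Fin n, (A (w j)).det :=
          Finset.prod_le_prod (fun _ _ => le_of_lt hld) (fun j _ => hA (w j))
  calc Real.sqrt (lam * del) ^ n = Real.sqrt ((lam * del) ^ n) := by
        rw [sqrt_pow'' hld.le]
    _ ≤ Real.sqrt |(wordProd A w).det| := by
        apply Real.sqrt_le_sqrt
        exact hdet.trans (le_abs_self _)
    _ ≤ opNorm (wordProd A w) := sqrt_det_le_opNorm _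

lemma tendsto_aux (a b : ℝ) (k : ℕ) (hk : 1 ≤ k) :
    Tendsto (fun n : ℕ => (a * n + b) / (2 * n + k)) atTop (𝓝 (a / 2)) := by
  have h0 : Tendsto (fun n : ℕ => (a + b / n) / (2 + k / n)) atTop (𝓝 ((a + 0) / (2 + 0))) := by
    apply Tendsto.div
    · exact tendsto_const_nhds.add (tendsto_const_div_atTop_nhds_zero_nat b)
    · exact tendsto_const_nhds.add (tendsto_const_div_atTop_nhds_zero_nat (k:ℝ))
    · norm_num
  rw [show (a + 0) / (2 + 0) = a / 2 by norm_num] at h0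
  apply h0.congr'
  filter_upwards [eventually_ge_atTop 1] with n hn
  have hn0 : (n : ℝ) ≠ 0 := Nat.cast_ne_zero.mpr (by omega)
  field_simp

lemma lsr_le_of (A : Fin 2 → Matrix (Fin 2) (Fin 2) ℝ) (lam del C : ℝ) (k : ℕ) (hk : 1 ≤ k)
    (hdel : 0 < del) (hdl : del < lam) (hlam : lam < 1) (hC : 0 < C)
    (hA : ∀ i, lam * del ≤ (A i).det)
    (hupper : ∀ n : ℕ, 1 ≤ n → minNormProd A (n + k + n) ≤ lam ^ (n + k) * del ^ n * C) :
    lsr A ≤ Real.sqrt (lam * del) := by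
  unfold lsr
  have hld : (0:ℝ) < lam * del := mul_pos (hdel.trans hdl) hdel
  have hlam0 : (0:ℝ) < lam := hdel.trans hdl
  set s : ℝ := Real.sqrt (lam * del) with hs
  have hspos : 0 < s := Real.sqrt_pos.mpr hld
  have hminlow : ∀ n : ℕ, s ^ n ≤ minNormProd A n := fun n =>
    minNormProd_ge A n _ (lower_bound A hdel hdl hA n)
  have hminpos : ∀ n : ℕ, 0 < minNormProd A n := fun n =>
    lt_of_lt_of_le (pow_pos hspos n) (hminlow n)
  set u : ℕ → ℝ := fun n => Real.log (minNormProd A n) with hu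
  have hsub : Subadditive u := by
    intro m n
    have := minNormProd_submul A m n
    calc u (m + n) ≤ Real.log (minNormProd A m * minNormProd A n) :=
          Real.log_le_log (hminpos _) this
      _ = u m + u n := Real.log_mul (hminpos m).ne' (hminpos n).ne'
  have hbddb : BddBelow (Set.range fun n : ℕ => u n / n) := by
    refine ⟨min 0 (Real.log s), ?_⟩
    rintro x ⟨n, rfl⟩
    rcases Nat.eq_zero_or_pos n with hn | hn
    · subst hn; simp
    · have hn0 : (0:ℝ) < (n:ℝ) := Nat.cast_pos.mpr hn
      have : (n : ℝ) * Real.log s ≤ u n := by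
        rw [← Real.log_pow]
        exact Real.log_le_log (pow_pos hspos n) (hminlow n)
      refine le_trans (min_le_right _ _) ?_
      rw [le_div_iff₀ hn0]
      linarith [this]
  have htend := hsub.tendsto_lim hbddb
  have hlim_le : hsub.lim ≤ (Real.log lam + Real.log del) / 2 := by
    have key : ∀ n : ℕ, 1 ≤ n →
        hsub.lim ≤ ((Real.log lam + Real.log del) * n + ((k:ℝ) * Real.log lam + Real.log C))
          / (2 * n + k) := by
      intro n hn
      have hN : ((n + k + n : ℕ) : ℝ) = 2 * n + k := by push_cast; ring
      have h1 : hsub.lim ≤ u (n + k + n) / ((n + k + n : ℕ) : ℝ) :=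
        hsub.lim_le_div hbddb (by omega)
      have h2 : u (n + k + n) ≤
          (Real.log lam + Real.log del) * n + ((k:ℝ) * Real.log lam + Real.log C) := by
        have := hupper n hn
        have hrhs : (0:ℝ) < lam ^ (n + k) * del ^ n * C :=
          mul_pos (mul_pos (pow_pos hlam0 _) (pow_pos hdel _)) hC
        calc u (n + k + n) ≤ Real.log (lam ^ (n + k) * del ^ n * C) :=
              Real.log_le_log (hminpos _) this
          _ = _ := by
              rw [Real.log_mul (by positivity) hC.ne',
                Real.log_mul (by positivity) (by positivity),
                Real.log_pow, Real.log_pow]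
              push_cast; ring
      refine h1.trans ?_
      rw [hN]
      have hden : (0:ℝ) < 2 * n + k := by positivity
      gcongr
    exact ge_of_tendsto (tendsto_aux (Real.log lam + Real.log del)
      ((k:ℝ) * Real.log lam + Real.log C) k hk)
      (Filter.eventually_atTop.mpr ⟨1, fun n hn => key n hn⟩)
  have hexp : Tendsto (fun n : ℕ => minNormProd A n ^ (1 / (n : ℝ))) atTop
      (𝓝 (Real.exp hsub.lim)) := by
    apply ((Real.continuous_exp.tendsto hsub.lim).comp htend).congr'
    filter_upwards [eventually_ge_atTop 1] with n hn
    rw [Real.rpow_def_of_pos (hminpos n), mul_one_div]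
    rfl
  rw [hexp.limUnder_eq]
  calc Real.exp hsub.lim ≤ Real.exp ((Real.log lam + Real.log del) / 2) :=
        Real.exp_le_exp.mpr hlim_le
    _ = s := by
      rw [← Real.log_mul hlam0.ne' hdel.ne', hs, Real.sqrt_eq_rpow,
        Real.rpow_def_of_pos hld]
      ring_nf

lemma rot_mul (a b : ℝ) : rot a * rot b = rot (a + b) := by
  ext i j
  fin_cases i <;> fin_cases j <;>
    simp [rot, Matrix.mul_apply, Fin.sum_univ_two, Real.cos_add, Real.sin_add] <;> ring

lemma rot_zero : rot 0 = 1 := by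
  ext i j; fin_cases i <;> fin_cases j <;> simp [rot, Matrix.one_apply]

lemma rot_pow (θ : ℝ) (m : ℕ) : rot θ ^ m = rot (m * θ) := by
  induction m with
  | zero => simp [rot_zero]
  | succ m ih => rw [pow_succ, ih, rot_mul]; congr 1; push_cast; ring

lemma rot_det (θ : ℝ) : (rot θ).det = 1 := by
  simp [rot, Matrix.det_fin_two_of]
  nlinarith [Real.sin_sq_add_cos_sq θ]

lemma part1aux (lam del : ℝ) (k : ℕ) (hk : 1 ≤ k) (n : ℕ) :
    (Matrix.diagonal ![lam, del]) ^ n * (lam • rot (Real.pi / (2 * k))) ^ k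
        * (Matrix.diagonal ![lam, del]) ^ n
      = (lam ^ (n + k) * del ^ n) • rot (Real.pi / 2) := by
  have hk0 : (k : ℝ) ≠ 0 := Nat.cast_ne_zero.mpr (by omega)
  have h2 : (lam • rot (Real.pi / (2 * k))) ^ k = lam ^ k • rot (Real.pi / 2) := by
    rw [smul_pow, rot_pow]
    have : (k:ℝ) * (Real.pi / (2 * k)) = Real.pi / 2 := by field_simp
    rw [this]
  rw [h2, Matrix.diagonal_pow]
  ext i j
  fin_cases i <;> fin_cases j <;>
    simp [rot, Matrix.mul_apply, Fin.sum_univ_two, Matrix.diagonal, Real.cos_pi_div_two,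
      Real.sin_pi_div_two, pow_add] <;> ring

/-- For `B₁ = diag(λ,δ)` and `B₂ = λ·R_{π/(2k)}`:
`B₁ⁿB₂ᵏB₁ⁿ = λ^{n+k}δⁿ·R_{π/2}` for all `n ≥ 1`, and consequently `ϱ̲(B₁,B₂) ≤ √(λδ)`. -/
theorem stmt14 (lam del : ℝ) (hdel : 0 < del) (hdl : del < lam) (hlam : lam < 1)
    (k : ℕ) (hk : 1 ≤ k) :
    (∀ n : ℕ, 1 ≤ n →
      (Matrix.diagonal ![lam, del]) ^ n * (lam • rot (Real.pi / (2 * k))) ^ k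
          * (Matrix.diagonal ![lam, del]) ^ n
        = (lam ^ (n + k) * del ^ n) • rot (Real.pi / 2)) ∧
    lsr ![Matrix.diagonal ![lam, del], lam • rot (Real.pi / (2 * k))]
      ≤ Real.sqrt (lam * del) := by
  have hlam0 : (0:ℝ) < lam := hdel.trans hdl
  set B1 : Matrix (Fin 2) (Fin 2) ℝ := Matrix.diagonal ![lam, del] with hB1
  set B2 : Matrix (Fin 2) (Fin 2) ℝ := lam • rot (Real.pi / (2 * k)) with hB2
  set A : Fin 2 → Matrix (Fin 2) (Fin 2) ℝ := ![B1, B2] with hAdef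
  have hA0 : A 0 = B1 := rfl
  have hA1 : A 1 = B2 := rfl
  set C : ℝ := opNorm (rot (Real.pi / 2)) with hC
  have hCpos : 0 < C := by
    have h1 : Real.sqrt |(rot (Real.pi / 2)).det| ≤ C := sqrt_det_le_opNorm _
    rw [rot_det] at h1
    simpa using lt_of_lt_of_le (by norm_num : (0:ℝ) < Real.sqrt |1|) h1
  have hA : ∀ i, lam * del ≤ (A i).det := by
    intro i
    fin_cases i
    · show lam * del ≤ B1.det
      rw [hB1, Matrix.det_diagonal]
      simp [Fin.prod_univ_two]
    · show lam * del ≤ B2.det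
      rw [hB2, Matrix.det_smul, rot_det]
      simp only [Fintype.card_fin, mul_one]
      nlinarith
  have hupper : ∀ n : ℕ, 1 ≤ n →
      minNormProd A (n + k + n) ≤ lam ^ (n + k) * del ^ n * C := by
    intro n hn
    set w : Fin (n + k + n) → Fin 2 :=
      Fin.append (Fin.append (fun _ : Fin n => (0 : Fin 2)) fun _ : Fin k => 1)
        fun _ : Fin n => 0 with hw
    have hwp : wordProd A w = B1 ^ n * B2 ^ k * B1 ^ n := by
      rw [hw, wordProd_append, wordProd_append, wordProd_const, wordProd_const, hA0, hA1]
    have hident := part1aux lam del k hk n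
    refine (minNormProd_le A _ w).trans ?_
    rw [hwp, hB1, hB2, hident]
    have hsm := myOpNorm_smul_le (lam ^ (n + k) * del ^ n) (rot (Real.pi / 2))
    rwa [abs_of_pos (by positivity)] at hsm
  constructor
  · intro n _
    exact part1aux lam del k hk n
  · exact lsr_le_of A lam del C k hk hdel hdl hlam hCpos hA hupper
end
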